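/- Let f : ℝ² → (0,1) be such that H(f(k)) := log(f(k)/(1−f(k))) satisfies H(f(k)) + H(f(k*)) = H(f(k')) + H(f(k'*)) for all quadruples with k + k* = k' + k'* and |k| + |k*| = |k'| + |k'*|, and assume H∘f is continuous with differentiable odd part. Then there exist a, c ∈ ℝ and b ∈ ℝ² such that f(k) = 1/(1 + exp(a + b·k + c|k|)) for all k ∈ ℝ². -/

import Mathlib

open scoped RealInnerProductSpace

lemma cauchy_nonneg (ψ : ℝ → ℝ) (hc : Continuous ψ) (h0 : ψ 0 = 0)
    (hadd : ∀ t s : ℝ, 0 ≤ t → 0 ≤ s → ψ (t + s) = ψ t + ψ s) :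
    ∀ t : ℝ, 0 ≤ t → ψ t = t * ψ 1 := by
  have hnat : ∀ (n : ℕ) (x : ℝ), 0 ≤ x → ψ (n * x) = n * ψ x := by
    intro n
    induction n with
    | zero => intro x hx; simpa using h0
    | succ n ih =>
      intro x hx
      have : ((n : ℝ) + 1) * x = (n : ℝ) * x + x := by ring
      rw [Nat.cast_succ, this, hadd _ _ (by positivity) hx, ih x hx]
      ring
  have hrat : ∀ q : ℚ, 0 ≤ q → ψ (q : ℝ) = (q : ℝ) * ψ 1 := by
    intro q hq
    have hq' : (0:ℝ) ≤ (q:ℝ) := by exact_mod_cast hq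
    have hd : (0:ℝ) < (q.den : ℝ) := by exact_mod_cast q.pos
    have hnum : ((q.num.toNat : ℕ) : ℝ) = (q.den : ℝ) * (q : ℝ) := by
      have h1 : (q.num.toNat : ℤ) = q.num := Int.toNat_of_nonneg (Rat.num_nonneg.mpr hq)
      have h2 : (q : ℝ) = (q.num : ℝ) / (q.den : ℝ) := Rat.cast_def q
      rw [h2]
      field_simp
      exact_mod_cast h1
    have e1 : ψ ((q.den : ℝ) * (q : ℝ)) = (q.den : ℝ) * ψ (q : ℝ) := hnat q.den _ hq'
    have e2 : ψ ((q.num.toNat : ℕ) * (1:ℝ)) = (q.num.toNat : ℝ) * ψ 1 :=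
      hnat q.num.toNat 1 zero_le_one
    rw [mul_one] at e2
    have : (q.den : ℝ) * ψ (q : ℝ) = (q.den : ℝ) * ((q : ℝ) * ψ 1) := by
      rw [← e1, ← hnum, e2, hnum]; ring
    exact mul_left_cancel₀ (ne_of_gt hd) this
  intro t ht
  have hS : IsClosed {x : ℝ | ψ x = x * ψ 1} := isClosed_eq hc (by continuity)
  have hsub : {x : ℝ | ∃ q : ℚ, 0 ≤ q ∧ x = (q : ℝ)} ⊆ {x : ℝ | ψ x = x * ψ 1} := by
    rintro x ⟨q, hq, rfl⟩; exact hrat q hq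
  have hmem : t ∈ closure {x : ℝ | ∃ q : ℚ, 0 ≤ q ∧ x = (q : ℝ)} := by
    rw [Metric.mem_closure_iff]
    intro ε hε
    obtain ⟨q, hq1, hq2⟩ := exists_rat_btwn (lt_add_of_pos_right t hε)
    refine ⟨q, ⟨q, by exact_mod_cast le_of_lt (lt_of_le_of_lt ht hq1), rfl⟩, ?_⟩
    rw [Real.dist_eq, abs_sub_lt_iff]
    constructor <;> linarith
  exact closure_minimal hsub hS hmem

theorem kernel_of_ee_collision_operator
    (f : EuclideanSpace ℝ (Fin 2) → ℝ)
    (hrange : ∀ k, f k ∈ Set.Ioo (0 : ℝ) 1)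
    (hinv : ∀ k ks k' ks' : EuclideanSpace ℝ (Fin 2),
      k + ks = k' + ks' → ‖k‖ + ‖ks‖ = ‖k'‖ + ‖ks'‖ →
      Real.log (f k / (1 - f k)) + Real.log (f ks / (1 - f ks))
        = Real.log (f k' / (1 - f k')) + Real.log (f ks' / (1 - f ks')))
    (hcont : Continuous fun k => Real.log (f k / (1 - f k)))
    (hoddpart : Differentiable ℝ fun k =>
      (Real.log (f k / (1 - f k)) - Real.log (f (-k) / (1 - f (-k)))) / 2) :
    ∃ (a c : ℝ) (b : EuclideanSpace ℝ (Fin 2)),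
      ∀ k, f k = 1 / (1 + Real.exp (a + ⟪b, k⟫ + c * ‖k‖)) := by
  set φ : EuclideanSpace ℝ (Fin 2) → ℝ := fun k => Real.log (f k / (1 - f k)) with hφdef
  -- Step A: radial affinity
  have key : ∀ u : EuclideanSpace ℝ (Fin 2), ‖u‖ = 1 → ∀ t : ℝ, 0 ≤ t →
      φ (t • u) = φ 0 + t * (φ u - φ 0) := by
    intro u hu
    have hψc : Continuous fun t : ℝ => φ (t • u) - φ 0 :=
      (hcont.comp (continuous_id.smul continuous_const)).sub continuous_const
    have hψ0 : (fun t : ℝ => φ (t • u) - φ 0) 0 = 0 := by simp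
    have hψadd : ∀ t s : ℝ, 0 ≤ t → 0 ≤ s →
        φ ((t + s) • u) - φ 0 = (φ (t • u) - φ 0) + (φ (s • u) - φ 0) := by
      intro t s ht hs
      have hmom : t • u + s • u = (t + s) • u + 0 := by rw [add_zero, add_smul]
      have hen : ‖t • u‖ + ‖s • u‖ = ‖(t + s) • u‖ + ‖(0 : EuclideanSpace ℝ (Fin 2))‖ := by
        rw [norm_zero, norm_smul, norm_smul, norm_smul, hu, Real.norm_eq_abs,
          Real.norm_eq_abs, Real.norm_eq_abs, abs_of_nonneg ht, abs_of_nonneg hs,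
          abs_of_nonneg (by linarith : (0:ℝ) ≤ t + s)]
        ring
      have := hinv (t • u) (s • u) ((t + s) • u) 0 hmom hen
      linarith
    have := cauchy_nonneg _ hψc hψ0 hψadd
    intro t ht
    have h := this t ht
    rw [one_smul] at h
    linarith
  -- Step B: even part of directional slope is constant
  have evenconst : ∀ u v : EuclideanSpace ℝ (Fin 2), ‖u‖ = 1 → ‖v‖ = 1 →
      φ u + φ (-u) = φ v + φ (-v) := by
    intro u v hu hv
    have hmom : u + (-u) = v + (-v) := by simp
    have hen : ‖u‖ + ‖-u‖ = ‖v‖ + ‖-v‖ := by rw [norm_neg, norm_neg, hu, hv]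
    exact hinv u (-u) v (-v) hmom hen
  set e : EuclideanSpace ℝ (Fin 2) := EuclideanSpace.single 0 1 with hedef
  have he : ‖e‖ = 1 := by
    rw [hedef, EuclideanSpace.norm_single]; norm_num
  set cc : ℝ := (φ e + φ (-e)) / 2 - φ 0 with hccdef
  set ω : EuclideanSpace ℝ (Fin 2) → ℝ := fun k => (φ k - φ (-k)) / 2 with hωdef
  have hω : Differentiable ℝ ω := hoddpart
  have hω0 : ω 0 = 0 := by simp [hωdef]
  -- expansions on each ray
  have expand : ∀ k : EuclideanSpace ℝ (Fin 2), k ≠ 0 →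
      φ k = φ 0 + ‖k‖ * (φ (‖k‖⁻¹ • k) - φ 0) ∧
      φ (-k) = φ 0 + ‖k‖ * (φ (-(‖k‖⁻¹ • k)) - φ 0) := by
    intro k hk
    have hnk : ‖k‖ ≠ 0 := norm_ne_zero_iff.mpr hk
    have hnk0 : 0 ≤ ‖k‖ := norm_nonneg k
    have hu : ‖‖k‖⁻¹ • k‖ = 1 := norm_smul_inv_norm hk
    have hu' : ‖-(‖k‖⁻¹ • k)‖ = 1 := by rw [norm_neg]; exact hu
    have hk1 : k = ‖k‖ • (‖k‖⁻¹ • k) := by rw [smul_smul, mul_inv_cancel₀ hnk, one_smul]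
    have hk2 : -k = ‖k‖ • (-(‖k‖⁻¹ • k)) := by rw [smul_neg, ← hk1]
    constructor
    · conv_lhs => rw [hk1]
      exact key _ hu ‖k‖ hnk0
    · conv_lhs => rw [hk2]
      exact key _ hu' ‖k‖ hnk0
  -- positive homogeneity of ω
  have hom : ∀ (k : EuclideanSpace ℝ (Fin 2)) (t : ℝ), 0 < t → ω (t • k) = t * ω k := by
    intro k t ht
    by_cases hk : k = 0
    · simp [hk, hω0]
    · have hnk : ‖k‖ ≠ 0 := norm_ne_zero_iff.mpr hk
      obtain ⟨h1, h2⟩ := expand k hk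
      have htk : t • k ≠ 0 := smul_ne_zero (ne_of_gt ht) hk
      obtain ⟨h3, h4⟩ := expand (t • k) htk
      have hntk : ‖t • k‖ = t * ‖k‖ := by
        rw [norm_smul, Real.norm_eq_abs, abs_of_pos ht]
      have huu : ‖t • k‖⁻¹ • (t • k) = ‖k‖⁻¹ • k := by
        rw [hntk, smul_smul]
        congr 1
        field_simp
      rw [huu, hntk] at h3 h4
      simp only [hωdef]
      rw [h1, h2, h3, h4]
      ring
  -- ω is linear via differentiability at 0
  set b' : EuclideanSpace ℝ (Fin 2) →L[ℝ] ℝ := fderiv ℝ ω 0 with hb'def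
  have hlin : ∀ k : EuclideanSpace ℝ (Fin 2), ω k = b' k := by
    intro k
    have hd : HasFDerivAt ω b' 0 := (hω 0).hasFDerivAt
    have hc : Filter.Tendsto (fun n : ℕ => ‖(n : ℝ) + 1‖) Filter.atTop Filter.atTop := by
      have hfe : (fun n : ℕ => ‖(n : ℝ) + 1‖) = fun n : ℕ => (n : ℝ) + 1 := by
        funext n
        rw [Real.norm_eq_abs, abs_of_nonneg (by positivity)]
      rw [hfe]
      exact Filter.tendsto_atTop_add_const_right _ 1 tendsto_natCast_atTop_atTop
    have hlim := hd.lim k hc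
    have heq : (fun n : ℕ => ((n : ℝ) + 1) • (ω (0 + ((n : ℝ) + 1)⁻¹ • k) - ω 0))
        = fun _ : ℕ => ω k := by
      funext n
      have hpos : (0:ℝ) < (n : ℝ) + 1 := by positivity
      rw [zero_add, hω0, sub_zero, hom k _ (inv_pos.mpr hpos), smul_eq_mul]
      field_simp
    rw [heq] at hlim
    exact tendsto_nhds_unique tendsto_const_nhds hlim
  -- full representation
  have hrep : ∀ k : EuclideanSpace ℝ (Fin 2), φ k = φ 0 + cc * ‖k‖ + b' k := by
    intro k
    by_cases hk : k = 0
    · simp [hk, ← hlin 0, hω0]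
    · obtain ⟨h1, h2⟩ := expand k hk
      have hu : ‖‖k‖⁻¹ • k‖ = 1 := norm_smul_inv_norm hk
      have hev : φ (‖k‖⁻¹ • k) + φ (-(‖k‖⁻¹ • k)) = φ e + φ (-e) := evenconst _ e hu he
      have hωk : ω k = ‖k‖ * ((φ (‖k‖⁻¹ • k) - φ (-(‖k‖⁻¹ • k))) / 2) := by
        simp only [hωdef]
        rw [h1, h2]; ring
      rw [← hlin k, hωk, h1, hccdef]
      have hsplit : φ (‖k‖⁻¹ • k) - φ 0 = ((φ e + φ (-e)) / 2 - φ 0)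
          + (φ (‖k‖⁻¹ • k) - φ (-(‖k‖⁻¹ • k))) / 2 := by linarith
      rw [hsplit]; ring
  -- conclude
  refine ⟨-φ 0, -cc, -((InnerProductSpace.toDual ℝ (EuclideanSpace ℝ (Fin 2))).symm b'),
    fun k => ?_⟩
  have hip : ⟪-((InnerProductSpace.toDual ℝ (EuclideanSpace ℝ (Fin 2))).symm b'), k⟫
      = -(b' k) := by
    rw [inner_neg_left, InnerProductSpace.toDual_symm_apply]
  have hexp : -φ 0 + ⟪-((InnerProductSpace.toDual ℝ (EuclideanSpace ℝ (Fin 2))).symm b'), k⟫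
      + -cc * ‖k‖ = -φ k := by
    rw [hip, hrep k]; ring
  rw [hexp]
  obtain ⟨hf0, hf1⟩ := hrange k
  have hpos : 0 < f k / (1 - f k) := div_pos hf0 (by linarith)
  have hexpφ : Real.exp (φ k) = f k / (1 - f k) := Real.exp_log hpos
  have hexpneg : Real.exp (-φ k) = (1 - f k) / f k := by
    rw [Real.exp_neg, hexpφ, inv_div]
  rw [hexpneg]
  have hone : 1 + (1 - f k) / f k = 1 / f k := by
    field_simp
    ring
  rw [hone, one_div_one_div]
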